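/- (Liouville bound of Mahler) Let p be a prime, F an algebraic closure of ZMod p, K = RatFunc F, and K̄ an algebraic closure of K. Let α ∈ K̄ not lie in the image of K, set n = natDegree(minpoly K α), and let w be a nonarchimedean absolute value on K̄ extending the infinite place of K. Then there exists a constant C ∈ ℝ such that for all r ∈ K: −log(w(α − algebraMap K K̄ r))/log p ≤ n·h(r) + C. -/

import Mathlib

open Polynomial

noncomputable section

/-- The degree of a rational function; for an element `r` of a rational function field this
is also its height `h(r) = max (natDegree (num r)) (natDegree (denom r))`. -/
def rfDeg {K : Type*} [Field K] (φ : RatFunc K) : ℕ :=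
  max φ.num.natDegree φ.denom.natDegree

/-- Composition of rational functions: `rfComp ψ χ = ψ ∘ χ`, obtained by evaluating `ψ` at `χ`
via the constant embedding. -/
def rfComp {K : Type*} [Field K] (ψ χ : RatFunc K) : RatFunc K :=
  RatFunc.eval (RatFunc.C) χ ψ

/-- Iterates of a rational function: `Φ_0 = X`, `Φ_1 = φ`, `Φ_{m+1} = φ ∘ Φ_m`. -/
def rfIter {K : Type*} [Field K] (φ : RatFunc K) : ℕ → RatFunc K
  | 0 => RatFunc.X
  | m + 1 => rfComp φ (rfIter φ m)

/-- `γ ∈ K` is not post-critical for `φ`: for every `m ≥ 1` the numerator of `Φ_m - γ`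
is separable of degree at least `d(φ)^m - 1`. -/
def NotPostCritical {K : Type*} [Field K] (φ : RatFunc K) (γ : K) : Prop :=
  ∀ m : ℕ, 1 ≤ m →
    ((rfIter φ m - RatFunc.C γ).num.Separable ∧
      rfDeg φ ^ m - 1 ≤ (rfIter φ m - RatFunc.C γ).num.natDegree)

/-- Coefficientwise image of a rational function under a field embedding `g`. -/
def rfMap {K L : Type*} [Field K] [Field L] (g : K →+* L) (φ : RatFunc K) : RatFunc L :=
  algebraMap (Polynomial L) (RatFunc L) (φ.num.map g) /
    algebraMap (Polynomial L) (RatFunc L) (φ.denom.map g)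

/-- `x` is algebraic over `k`, where `k` maps into the ambient ring via `f`. -/
def IsAlgebraicVia {k L : Type*} [CommRing k] [CommRing L] (f : k →+* L) (x : L) : Prop :=
  ∃ q : Polynomial k, q ≠ 0 ∧ Polynomial.eval₂ f x q = 0

/-- `φ ∈ K(z)` is isotrivial relative to the constant field `k`, where `f : k →+* K̄` and
`g : K →+* K̄` are the embeddings into an algebraic closure of `K`: there are degree-one
`μ, ν ∈ K̄(z)`, inverse to each other, such that all coefficients of the numerator and
denominator of `ν ∘ φ̄ ∘ μ` are algebraic over `k`. -/
def Isotrivial {k K Kbar : Type*} [Field k] [Field K] [Field Kbar]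
    (f : k →+* Kbar) (g : K →+* Kbar) (φ : RatFunc K) : Prop :=
  ∃ μ ν : RatFunc Kbar, rfDeg μ = 1 ∧ rfDeg ν = 1 ∧
    rfComp ν μ = RatFunc.X ∧ rfComp μ ν = RatFunc.X ∧
    (∀ i : ℕ, IsAlgebraicVia f ((rfComp ν (rfComp (rfMap g φ) μ)).num.coeff i)) ∧
    (∀ i : ℕ, IsAlgebraicVia f ((rfComp ν (rfComp (rfMap g φ) μ)).denom.coeff i))

/-- An algebraic closure of `𝔽_p = ZMod p`. -/
abbrev Fp (p : ℕ) [Fact p.Prime] : Type := AlgebraicClosure (ZMod p)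

/-- The rational function field `K = 𝔽̄_p(t)`. -/
abbrev Kp (p : ℕ) [Fact p.Prime] : Type := RatFunc (Fp p)

/-- The embedding `ZMod p →+* K̄` for `K̄` an algebraic closure of `Kp p`. -/
def constEmb (p : ℕ) [Fact p.Prime] (Kbar : Type*) [Field Kbar] [Algebra (Kp p) Kbar] :
    ZMod p →+* Kbar :=
  (algebraMap (Kp p) Kbar).comp ((RatFunc.C : Fp p →+* Kp p).comp (algebraMap (ZMod p) (Fp p)))

end

noncomputable section LiouvilleAux

variable {F : Type*} [Field F]

lemma aux_mul_denom_eq_num (x : RatFunc F) :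
    x * algebraMap (Polynomial F) (RatFunc F) x.denom =
      algebraMap (Polynomial F) (RatFunc F) x.num :=
  ((div_eq_iff (RatFunc.algebraMap_ne_zero x.denom_ne_zero)).mp
    (RatFunc.num_div_denom x)).symm

/-- common denominator of coefficients -/
def auxCoeffDen (f : Polynomial (RatFunc F)) : Polynomial F :=
  ∏ i ∈ Finset.range (f.natDegree + 1), (f.coeff i).denom

lemma auxCoeffDen_ne_zero (f : Polynomial (RatFunc F)) : auxCoeffDen f ≠ 0 :=
  Finset.prod_ne_zero_iff.mpr fun _ _ => RatFunc.denom_ne_zero _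

lemma auxCoeffDen_mul_coeff_mem (f : Polynomial (RatFunc F)) {i : ℕ}
    (hi : i ∈ Finset.range (f.natDegree + 1)) :
    algebraMap (Polynomial F) (RatFunc F) (auxCoeffDen f) * f.coeff i ∈
      (algebraMap (Polynomial F) (RatFunc F)).range := by
  rw [auxCoeffDen, ← Finset.prod_erase_mul _ _ hi]
  refine ⟨(∏ j ∈ (Finset.range (f.natDegree + 1)).erase i, (f.coeff j).denom) * (f.coeff i).num, ?_⟩
  rw [map_mul, map_mul, mul_assoc,
    mul_comm (algebraMap (Polynomial F) (RatFunc F) (f.coeff i).denom),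
    aux_mul_denom_eq_num]

lemma aux_eval_mul_mem (f : Polynomial (RatFunc F)) (r : RatFunc F) :
    algebraMap (Polynomial F) (RatFunc F) (auxCoeffDen f) * f.eval r *
      (algebraMap (Polynomial F) (RatFunc F) r.denom) ^ f.natDegree ∈
      (algebraMap (Polynomial F) (RatFunc F)).range := by
  rw [Polynomial.eval_eq_sum_range, Finset.mul_sum, Finset.sum_mul]
  apply Subring.sum_mem
  intro i hi
  have hin : i ≤ f.natDegree := Nat.lt_succ_iff.mp (Finset.mem_range.mp hi)
  have hnum : (algebraMap (Polynomial F) (RatFunc F) r.num) ^ i =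
      r ^ i * (algebraMap (Polynomial F) (RatFunc F) r.denom) ^ i := by
    rw [← mul_pow, aux_mul_denom_eq_num]
  have h1 : algebraMap (Polynomial F) (RatFunc F) (auxCoeffDen f) * (f.coeff i * r ^ i) *
      (algebraMap (Polynomial F) (RatFunc F) r.denom) ^ f.natDegree =
      (algebraMap (Polynomial F) (RatFunc F) (auxCoeffDen f) * f.coeff i) *
      (algebraMap (Polynomial F) (RatFunc F) (r.num ^ i * r.denom ^ (f.natDegree - i))) := by
    have hsplit : (algebraMap (Polynomial F) (RatFunc F) r.denom) ^ f.natDegree =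
        (algebraMap (Polynomial F) (RatFunc F) r.denom) ^ i *
        (algebraMap (Polynomial F) (RatFunc F) r.denom) ^ (f.natDegree - i) := by
      rw [← pow_add, Nat.add_sub_cancel' hin]
    rw [map_mul, map_pow, map_pow, hnum, hsplit]
    ring
  rw [h1]
  exact Subring.mul_mem _ (auxCoeffDen_mul_coeff_mem f hi) ⟨_, rfl⟩

lemma aux_intDegree_eval_ge (f : Polynomial (RatFunc F)) (r : RatFunc F) (hfr : f.eval r ≠ 0) :
    -(((auxCoeffDen f).natDegree : ℤ) + f.natDegree * (max r.num.natDegree r.denom.natDegree)) ≤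
      (f.eval r).intDegree := by
  obtain ⟨P, hP⟩ := aux_eval_mul_mem f r
  have hD : algebraMap (Polynomial F) (RatFunc F) (auxCoeffDen f) ≠ 0 :=
    RatFunc.algebraMap_ne_zero (auxCoeffDen_ne_zero f)
  have hv : (algebraMap (Polynomial F) (RatFunc F) r.denom) ^ f.natDegree ≠ 0 :=
    pow_ne_zero _ (RatFunc.algebraMap_ne_zero (RatFunc.denom_ne_zero _))
  have hP0 : P ≠ 0 := by
    rintro rfl
    rw [map_zero] at hP
    exact (mul_ne_zero (mul_ne_zero hD hfr) hv) hP.symm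
  have hdeg := congrArg RatFunc.intDegree hP
  rw [RatFunc.intDegree_polynomial, RatFunc.intDegree_mul (mul_ne_zero hD hfr) hv,
    RatFunc.intDegree_mul hD hfr, ← map_pow, RatFunc.intDegree_polynomial,
    RatFunc.intDegree_polynomial, Polynomial.natDegree_pow] at hdeg
  have hd : (r.denom.natDegree : ℤ) ≤ (max r.num.natDegree r.denom.natDegree : ℕ) := by
    exact_mod_cast le_max_right _ _
  have hnd : (f.natDegree : ℤ) * r.denom.natDegree ≤
      (f.natDegree : ℤ) * (max r.num.natDegree r.denom.natDegree : ℕ) :=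
    mul_le_mul_of_nonneg_left hd (by positivity)
  have hPn : (0 : ℤ) ≤ P.natDegree := Int.ofNat_nonneg _
  push_cast at hdeg hnd ⊢
  linarith

lemma aux_multiset_prod_le (M : ℝ) (hM : 0 ≤ M) (s : Multiset ℝ)
    (h : ∀ x ∈ s, 0 ≤ x ∧ x ≤ M) : s.prod ≤ M ^ Multiset.card s := by
  induction s using Multiset.induction with
  | empty => simp
  | cons a t ih =>
    rw [Multiset.prod_cons, Multiset.card_cons, pow_succ, mul_comm (M ^ Multiset.card t) M]
    have ha := h a (Multiset.mem_cons_self a t)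
    have ht := ih fun x hx => h x (Multiset.mem_cons_of_mem hx)
    have htn : 0 ≤ t.prod := Multiset.prod_nonneg fun x hx => (h x (Multiset.mem_cons_of_mem hx)).1
    exact mul_le_mul ha.2 ht htn hM

end LiouvilleAux

noncomputable section

/-- **Theorem (Liouville bound of Mahler).** -/
theorem liouville_bound
    (p : ℕ) [Fact p.Prime]
    (Kbar : Type) [Field Kbar] [Algebra (Kp p) Kbar] [IsAlgClosure (Kp p) Kbar]
    (α : Kbar) (hα : α ∉ Set.range (algebraMap (Kp p) Kbar))
    (n : ℕ) (hn : (minpoly (Kp p) α).natDegree = n)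
    (w : AbsoluteValue Kbar ℝ)
    (hna : ∀ x y : Kbar, w (x + y) ≤ max (w x) (w y))
    (hext : ∀ r : Kp p, r ≠ 0 → w (algebraMap (Kp p) Kbar r) = (p : ℝ) ^ r.intDegree) :
    ∃ C : ℝ, ∀ r : Kp p,
      -Real.log (w (α - algebraMap (Kp p) Kbar r)) / Real.log p ≤
        (n : ℝ) * (rfDeg r : ℝ) + C := by
  classical
  set K := Kp p
  set g : K →+* Kbar := algebraMap K Kbar with hg
  have halg : Algebra.IsAlgebraic K Kbar := IsAlgClosure.isAlgebraic
  have hint : IsIntegral K α := (halg.isAlgebraic α).isIntegral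
  set f : Polynomial K := minpoly K α with hfdef
  have hf0 : f ≠ 0 := minpoly.ne_zero hint
  have hmon : f.Monic := minpoly.monic hint
  have hn2 : 2 ≤ n := by
    rw [← hn]
    refine (minpoly.two_le_natDegree_iff hint).mpr ?_
    rintro ⟨x, hx⟩
    exact hα ⟨x, hx⟩
  -- roots
  haveI hclosed : IsAlgClosed Kbar := IsAlgClosure.isAlgClosed K
  have hmap0 : f.map g ≠ 0 := (hmon.map g).ne_zero
  have hαroot : α ∈ (f.map g).roots := by
    rw [Polynomial.mem_roots hmap0, Polynomial.IsRoot, Polynomial.eval_map,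
      ← Polynomial.aeval_def]
    exact minpoly.aeval K α
  obtain ⟨s, hs⟩ := Multiset.exists_cons_of_mem hαroot
  have hsplits : (f.map g).Splits := IsAlgClosed.splits _
  have hcard : Multiset.card (f.map g).roots = n := by
    rw [← hsplits.natDegree_eq_card_roots, Polynomial.natDegree_map, hn]
  have hscard : Multiset.card s = n - 1 := by
    have := hcard
    rw [hs, Multiset.card_cons] at this
    omega
  -- the constant M
  set M : ℝ := (((f.map g).roots).map (fun a => w (α - a))).sum + 1 with hM
  have hM1 : 1 ≤ M := by
    have : 0 ≤ (((f.map g).roots).map (fun a => w (α - a))).sum :=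
      Multiset.sum_nonneg (by
        intro x hx
        obtain ⟨a, _, rfl⟩ := Multiset.mem_map.mp hx
        exact w.nonneg _)
    simp only [hM]; linarith
  have hMa : ∀ a ∈ (f.map g).roots, w (α - a) ≤ M := by
    intro a ha
    have h1 : w (α - a) ≤ (((f.map g).roots).map (fun b => w (α - b))).sum :=
      Multiset.single_le_sum (by
        intro x hx
        obtain ⟨b, _, rfl⟩ := Multiset.mem_map.mp hx
        exact w.nonneg _) _ (Multiset.mem_map_of_mem _ ha)
    simp only [hM]; linarith
  have hM0 : 0 ≤ M := le_trans zero_le_one hM1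
  have hlogM : 0 ≤ Real.log M := Real.log_nonneg hM1
  have hp1 : (1 : ℝ) < p := by exact_mod_cast (Fact.out : p.Prime).one_lt
  have hlogp : 0 < Real.log p := Real.log_pos hp1
  set B : ℕ := (auxCoeffDen f).natDegree with hB
  refine ⟨(B : ℝ) + (n - 1 : ℕ) * Real.log M / Real.log p, ?_⟩
  have hC0 : 0 ≤ (B : ℝ) + (n - 1 : ℕ) * Real.log M / Real.log p := by positivity
  intro r
  set ρ : Kbar := g r with hρ
  have hαρ : α - ρ ≠ 0 := by
    intro h
    exact hα ⟨r, (sub_eq_zero.mp h).symm⟩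
  have hd0 : 0 < w (α - ρ) := w.pos hαρ
  by_cases hcase : 1 ≤ w (α - ρ)
  · have h1 : -Real.log (w (α - ρ)) / Real.log p ≤ 0 :=
      div_nonpos_of_nonpos_of_nonneg (neg_nonpos.mpr (Real.log_nonneg hcase)) (le_of_lt hlogp)
    have h2 : (0:ℝ) ≤ (n : ℝ) * (rfDeg r : ℝ) + ((B : ℝ) + (n - 1 : ℕ) * Real.log M / Real.log p) := by
      positivity
    exact le_trans h1 h2
  · push_neg at hcase
    -- f.eval r ≠ 0
    have hfr : f.eval r ≠ 0 := by
      intro h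
      have hdvd : Polynomial.X - Polynomial.C r ∣ f := Polynomial.dvd_iff_isRoot.mpr h
      obtain ⟨q, hq⟩ := hdvd
      have hirr := minpoly.irreducible hint
      rcases hirr.isUnit_or_isUnit hq with hu | hu
      · exact Polynomial.not_isUnit_X_sub_C r hu
      · have hq0 : q ≠ 0 := by
          intro h0; rw [h0, mul_zero] at hq; exact hf0 hq
        have : f.natDegree = 1 := by
          rw [hq, Polynomial.natDegree_mul (Polynomial.X_sub_C_ne_zero r) hq0,
            Polynomial.natDegree_X_sub_C, Polynomial.natDegree_eq_zero_of_isUnit hu]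
        omega
    -- the key identity
    have hkey : w (g (f.eval r)) = w (α - ρ) * ((s.map (fun a => w (ρ - a))).prod) := by
      have h1 : g (f.eval r) = (f.map g).eval ρ := by
        rw [Polynomial.eval_map, Polynomial.eval₂_hom]
      have h2 : f.map g = ((f.map g).roots.map (fun a => Polynomial.X - Polynomial.C a)).prod :=
        Polynomial.Splits.eq_prod_roots_of_monic (IsAlgClosed.splits _)
          (hmon.map g)
      rw [h1]
      conv_lhs => rw [h2]
      rw [Polynomial.eval_multiset_prod, Multiset.map_map, hs, Multiset.map_cons,
        Multiset.prod_cons, map_mul, map_multiset_prod, Multiset.map_map]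
      congr 1
      · simp [w.map_sub ρ α]
      · exact congrArg Multiset.prod (Multiset.map_congr rfl (fun a _ => by simp))
    -- bound the product
    have hprod : (s.map (fun a => w (ρ - a))).prod ≤ M ^ (n - 1) := by
      rw [← hscard, ← Multiset.card_map (fun a => w (ρ - a)) s]
      apply aux_multiset_prod_le M hM0
      intro x hx
      obtain ⟨a, ha, rfl⟩ := Multiset.mem_map.mp hx
      refine ⟨w.nonneg _, ?_⟩
      have : ρ - a = (ρ - α) + (α - a) := by ring
      rw [this]
      refine le_trans (hna _ _) (max_le ?_ (hMa a (hs ▸ Multiset.mem_cons_of_mem ha)))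
      rw [← w.map_sub]
      exact le_trans (le_of_lt hcase) hM1
    -- lower bound from hext
    have hwfr : w (g (f.eval r)) = (p : ℝ) ^ (f.eval r).intDegree := hext _ hfr
    have hle : ((p : ℝ) ^ (-(((B : ℤ) + n * (rfDeg r : ℤ))))) ≤ w (g (f.eval r)) := by
      rw [hwfr]
      apply zpow_le_zpow_right₀ (le_of_lt hp1)
      have := aux_intDegree_eval_ge f r hfr
      rw [hn] at this
      exact le_trans (by rfl) this
    -- combine
    have hcomb : ((p : ℝ) ^ (-(((B : ℤ) + n * (rfDeg r : ℤ))))) ≤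
        w (α - ρ) * M ^ (n - 1) := by
      refine le_trans hle ?_
      rw [hkey]
      exact mul_le_mul_of_nonneg_left hprod (w.nonneg _)
    have hzpos : (0:ℝ) < (p : ℝ) ^ (-(((B : ℤ) + n * (rfDeg r : ℤ)))) :=
      zpow_pos (by linarith) _
    have hlog := Real.log_le_log hzpos hcomb
    rw [Real.log_zpow, Real.log_mul (ne_of_gt hd0) (by positivity),
      Real.log_pow] at hlog
    push_cast at hlog
    rw [div_le_iff₀ hlogp]
    have hexp : ((n : ℝ) * (rfDeg r : ℝ) + ((B : ℝ) + (n - 1 : ℕ) * Real.log M / Real.log p)) *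
        Real.log p = ((n : ℝ) * (rfDeg r : ℝ) + (B : ℝ)) * Real.log p +
        (n - 1 : ℕ) * Real.log M := by
      field_simp
      ring
    rw [hexp]
    linarith [hlog]


end
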